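/- If 𝒮 is a set system on an n-element ground set with VC dimension at most d, then |𝒮| ≤ Σ_{i=0}^{d} C(n, i) ≤ 2n^d (the latter inequality for n, d ≥ 1). -/

import Mathlib

open Finset

lemma aux_geom (n d : ℕ) (hn : 2 ≤ n) :
    ∑ i ∈ Finset.range (d + 1), n ^ i ≤ 2 * n ^ d := by
  induction d with
  | zero => simp
  | succ d ih =>
    rw [Finset.sum_range_succ]
    calc ∑ i ∈ Finset.range (d + 1), n ^ i + n ^ (d + 1)
        ≤ 2 * n ^ d + n ^ (d + 1) := by omega
      _ ≤ n * n ^ d + n ^ (d + 1) := by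
          have : n ^ d ≤ n ^ d := le_rfl
          nlinarith [pow_pos (show 0 < n by omega) d]
      _ = 2 * n ^ (d + 1) := by ring

theorem stmt_11 {Ω : Type*} [Fintype Ω] [DecidableEq Ω]
    (𝒮 : Finset (Finset Ω)) (n d : ℕ) (hn : n = Fintype.card Ω)
    (hn1 : 1 ≤ n) (hd1 : 1 ≤ d)
    (hVC : 𝒮.vcDim ≤ d) :
    𝒮.card ≤ ∑ i ∈ Finset.range (d + 1), n.choose i ∧
      ∑ i ∈ Finset.range (d + 1), n.choose i ≤ 2 * n ^ d := by
  constructor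
  · calc 𝒮.card ≤ 𝒮.shatterer.card := 𝒮.card_le_card_shatterer
      _ ≤ ∑ k ∈ Finset.Iic 𝒮.vcDim, (Fintype.card Ω).choose k :=
          Finset.card_shatterer_le_sum_vcDim
      _ ≤ ∑ i ∈ Finset.range (d + 1), n.choose i := by
          rw [hn, show Finset.range (d+1) = Finset.Iic d by ext x; simp [Nat.lt_succ_iff]]
          exact Finset.sum_le_sum_of_subset (Finset.Iic_subset_Iic.2 hVC)
  · rcases eq_or_lt_of_le hn1 with h1 | h2
    · have : n = 1 := h1.symm
      subst this
      rw [Finset.sum_range_succ']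
      have : ∀ i ∈ Finset.range d, Nat.choose 1 (i + 1) ≤ if i = 0 then 1 else 0 := by
        intro i _
        rcases i with _ | i
        · simp
        · simp only [if_neg (by omega : ¬ i + 1 = 0)]
          rw [Nat.choose_eq_zero_of_lt (by omega)]
      calc ∑ i ∈ Finset.range d, Nat.choose 1 (i + 1) + Nat.choose 1 0
          ≤ ∑ i ∈ Finset.range d, (if i = 0 then 1 else 0) + 1 := by
            gcongr with i hi
            · exact this i hi
            · simp
        _ ≤ 1 + 1 := by
            gcongr
            rw [Finset.sum_ite_eq' (Finset.range d) 0 (fun _ => 1)]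
            split <;> simp
        _ ≤ 2 * 1 ^ d := by simp
    · calc ∑ i ∈ Finset.range (d + 1), n.choose i
          ≤ ∑ i ∈ Finset.range (d + 1), n ^ i :=
            Finset.sum_le_sum fun i _ => Nat.choose_le_pow n i
        _ ≤ 2 * n ^ d := aux_geom n d h2
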